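/- Let S have a zero element 0_S (i.e., 0_S·λ = 0_S for all λ ∈ S) and let S⊗G be the S-expanded multialgebra of a higher-order Lie algebra G of even order n. Then the quotient of S⊗G by the subspace spanned by {0_S ⊗ x : x ∈ G} carries a well-defined induced n-bracket which is alternating and satisfies the generalized Jacobi identity (the 0_S-reduced multialgebra). -/

import Mathlib

/-- Generalized Jacobi identity for an alternating (m+1)-bracket. -/
def GJI {K G : Type*} [CommRing K] [AddCommGroup G] [Module K G] {m : ℕ}
    (B : AlternatingMap K G G (Fin (m + 1))) : Prop :=
  ∀ x : Fin (2 * m + 1) → G,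
    ∑ σ : Equiv.Perm (Fin (2 * m + 1)), (Equiv.Perm.sign σ : ℤ) •
      B (Fin.cons (B fun j => x (σ (Fin.castLE (by omega) j)))
        (fun j : Fin m => x (σ ⟨m + 1 + j.1, by have := j.isLt; omega⟩))) = 0

/-- n-fold product in a (possibly non-unital) multiplicative structure. -/
def sprod {S : Type*} [Mul S] {m : ℕ} (l : Fin (m + 1) → S) : S :=
  (List.ofFn fun j : Fin m => l j.succ).foldl (· * ·) (l 0)

/-- The generator `λ ⊗ x` of the S-expanded module `S ⊗ G` (modelled as the free
module `S →₀ G` on the semigroup S with coefficients in G). -/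
noncomputable def gen {S G : Type*} [AddCommGroup G] (lam : S) (x : G) : S →₀ G :=
  Finsupp.single lam x

section auxSemigroup
variable {S : Type*} [CommSemigroup S]

lemma foldl_eq_z {z : S} (hz : ∀ lam : S, z * lam = z) :
    ∀ (li : List S) (a : S), (a = z ∨ z ∈ li) → li.foldl (· * ·) a = z
  | [], a, h => by simpa using h.resolve_right (by simp)
  | b :: t, a, h => by
    have h' : a * b = z ∨ z ∈ t := by
      rcases h with rfl | h
      · exact Or.inl (hz b)
      · rcases List.mem_cons.mp h with rfl | h
        · exact Or.inl (by rw [mul_comm]; exact hz a)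
        · exact Or.inr h
    simpa using foldl_eq_z hz t (a * b) h'

lemma sprod_eq_z {m : ℕ} {z : S} (hz : ∀ lam : S, z * lam = z)
    (l : Fin (m + 1) → S) (i : Fin (m + 1)) (h : l i = z) : sprod l = z := by
  apply foldl_eq_z hz
  induction i using Fin.cases with
  | zero => exact Or.inl h
  | succ j => exact Or.inr (List.mem_ofFn.mpr ⟨j, h⟩)

lemma foldl_coe (li : List S) (a : S) :
    ((li.foldl (· * ·) a : S) : WithOne S) =
      (li.map (fun s : S => (s : WithOne S))).foldl (· * ·) (a : WithOne S) := by
  induction li generalizing a with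
  | nil => rfl
  | cons b t ih => simp only [List.foldl_cons, List.map_cons, ih, WithOne.coe_mul]

lemma foldl_mul_eq {M : Type*} [Monoid M] : ∀ (li : List M) (a : M),
    li.foldl (· * ·) a = a * li.prod
  | [], a => by simp
  | b :: t, a => by
    simp only [List.foldl_cons, List.prod_cons, foldl_mul_eq t (a * b), mul_assoc]

lemma sprod_coe {m : ℕ} (l : Fin (m + 1) → S) :
    ((sprod l : S) : WithOne S) = ∏ k, (l k : WithOne S) := by
  unfold sprod
  rw [foldl_coe, foldl_mul_eq, List.map_ofFn, List.prod_ofFn, Fin.prod_univ_succ]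
  rfl

end auxSemigroup

lemma cons_gen {S G : Type*} [AddCommGroup G] {m : ℕ} (a : S) (u : G)
    (p : Fin m → S) (q : Fin m → G) :
    (Fin.cons (gen a u) (fun j => gen (p j) (q j)) : Fin (m + 1) → (S →₀ G)) =
      fun k => gen ((Fin.cons a p : Fin (m + 1) → S) k)
        ((Fin.cons u q : Fin (m + 1) → G) k) := by
  funext k
  refine Fin.cases ?_ ?_ k <;> simp

section J
variable {K M : Type*} [Field K] [AddCommGroup M] [Module K M] {m : ℕ}

/-- The generalized-Jacobi expression as a multilinear map in the 2m+1 arguments. -/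
noncomputable def Jmap (Bm : MultilinearMap K (fun _ : Fin (m + 1) => M) M) :
    MultilinearMap K (fun _ : Fin (2 * m + 1) => M) M :=
  let F := (MultilinearMap.curryLeft Bm).compMultilinearMap Bm
  let E : (Fin (m + 1) ⊕ Fin m) ≃ Fin (2 * m + 1) := finSumFinEquiv.trans (finCongr (by omega))
  ∑ σ : Equiv.Perm (Fin (2 * m + 1)), (Equiv.Perm.sign σ : ℤ) •
    (F.uncurrySum.domDomCongr (E.trans σ))

lemma Jmap_apply (Bm : MultilinearMap K (fun _ : Fin (m + 1) => M) M)
    (x : Fin (2 * m + 1) → M) :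
    Jmap Bm x = ∑ σ : Equiv.Perm (Fin (2 * m + 1)), (Equiv.Perm.sign σ : ℤ) •
      Bm (Fin.cons (Bm fun j => x (σ (Fin.castLE (by omega) j)))
        (fun j : Fin m => x (σ ⟨m + 1 + j.1, by have := j.isLt; omega⟩))) := by
  rw [Jmap, MultilinearMap.sum_apply]
  refine Finset.sum_congr rfl fun σ _ => ?_
  rw [MultilinearMap.smul_apply, MultilinearMap.domDomCongr_apply,
    MultilinearMap.uncurrySum_apply, LinearMap.compMultilinearMap_apply,
    MultilinearMap.curryLeft_apply]
  have h1 : ((fun p => x ((finSumFinEquiv.trans (finCongr (by omega : (m+1)+m = 2*m+1))).trans σ p)) ∘ Sum.inl)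
      = fun j : Fin (m+1) => x (σ (Fin.castLE (by omega) j)) := by
    funext j
    simp only [Function.comp_apply, Equiv.trans_apply]
    congr 2
  have h2 : ((fun p => x ((finSumFinEquiv.trans (finCongr (by omega : (m+1)+m = 2*m+1))).trans σ p)) ∘ Sum.inr)
      = fun j : Fin m => x (σ ⟨m + 1 + j.1, by have := j.isLt; omega⟩) := by
    funext j
    simp only [Function.comp_apply, Equiv.trans_apply]
    congr 2
  rw [← h1, ← h2]
  rfl

end J

/-- if S has a zero element 0_S, the quotient of S⊗G by the
subspace spanned by `{0_S ⊗ x : x ∈ G}` carries a well-defined induced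
alternating (m+1)-bracket satisfying the generalized Jacobi identity
(the 0_S-reduced multialgebra). -/
theorem zeroS_reduced_multialgebra {K G S : Type*} [Field K] [AddCommGroup G] [Module K G]
    [CommSemigroup S] [Finite S] (m : ℕ) (hn : Even (m + 1))
    (z : S) (hz : ∀ lam : S, z * lam = z)
    (B : AlternatingMap K G G (Fin (m + 1))) (hB : GJI B)
    (Bexp : AlternatingMap K (S →₀ G) (S →₀ G) (Fin (m + 1)))
    (hBexp : ∀ (lam : Fin (m + 1) → S) (x : Fin (m + 1) → G),
      Bexp (fun k => gen (lam k) (x k)) = gen (sprod lam) (B x)) :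
    ∃ Bq : AlternatingMap K
        ((S →₀ G) ⧸ Submodule.span K {e : S →₀ G | ∃ x : G, e = gen z x})
        ((S →₀ G) ⧸ Submodule.span K {e : S →₀ G | ∃ x : G, e = gen z x})
        (Fin (m + 1)),
      (∀ x : Fin (m + 1) → (S →₀ G),
        Bq (fun k => Submodule.Quotient.mk (x k)) = Submodule.Quotient.mk (Bexp x)) ∧
      GJI (K := K)
        (G := (S →₀ G) ⧸ Submodule.span K {e : S →₀ G | ∃ x : G, e = gen z x}) Bq := by
  classical
  set NN : Submodule K (S →₀ G) := Submodule.span K {e : S →₀ G | ∃ x : G, e = gen z x} with hNN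
  -- Step 1: the ideal property on generators
  have key0 : ∀ (v : Fin (m + 1) → (S →₀ G)) (i : Fin (m + 1)) (y : G),
      v i = gen z y → Bexp v ∈ NN := by
    intro v i y hv
    have hxv : Bexp v = Bexp (fun j => ∑ s ∈ (v j).support, gen s (v j s)) := by
      congr 1
      funext j
      exact (Finsupp.sum_single (v j)).symm
    have hms := Bexp.toMultilinearMap.map_sum_finset (fun j s => gen s (v j s))
      (fun j => (v j).support)
    simp only [AlternatingMap.coe_multilinearMap] at hms
    rw [hxv, hms]
    refine Submodule.sum_mem _ fun r hr => ?_
    have hri := (Fintype.mem_piFinset.mp hr) i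
    rw [hv] at hri
    have hrz : r i = z := by
      have := Finsupp.support_single_subset hri
      simpa using this
    rw [hBexp r (fun j => v j (r j)), sprod_eq_z hz r i hrz]
    exact Submodule.subset_span ⟨_, rfl⟩
  -- Step 2: the ideal property
  have key : ∀ (v : Fin (m + 1) → (S →₀ G)) (i : Fin (m + 1)),
      v i ∈ NN → Bexp v ∈ NN := by
    intro v i hvi
    let L : (S →₀ G) →ₗ[K] (S →₀ G) :=
      { toFun := fun u => Bexp (Function.update v i u)
        map_add' := fun a b => Bexp.map_update_add v i a b
        map_smul' := fun c a => Bexp.map_update_smul v i c a }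
    have hle : NN ≤ NN.comap L := by
      rw [hNN, Submodule.span_le]
      rintro _ ⟨y, rfl⟩
      have : Bexp (Function.update v i (gen z y)) ∈ NN :=
        key0 (Function.update v i (gen z y)) i y (by simp)
      simpa [L, Submodule.mem_comap, hNN] using this
    have := hle hvi
    simpa [L, Submodule.mem_comap, Function.update_eq_self] using this
  -- Step 3: congruence modulo NN
  have congr_lem : ∀ w x : Fin (m + 1) → (S →₀ G), (∀ k, w k - x k ∈ NN) →
      NN.mkQ (Bexp w) = NN.mkQ (Bexp x) := by
    have main : ∀ t : ℕ, ∀ w x : Fin (m + 1) → (S →₀ G), (∀ k, w k - x k ∈ NN) →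
        (∀ k : Fin (m + 1), t ≤ k.1 → w k = x k) → NN.mkQ (Bexp w) = NN.mkQ (Bexp x) := by
      intro t
      induction t with
      | zero =>
        intro w x _ h
        have : w = x := funext fun k => h k (Nat.zero_le _)
        rw [this]
      | succ t ih =>
        intro w x hmem h
        by_cases ht : t < m + 1
        · set i : Fin (m + 1) := ⟨t, ht⟩ with hi
          have hsplit : Bexp w =
              Bexp (Function.update w i (x i)) + Bexp (Function.update w i (w i - x i)) := by
            have h1 : Bexp w = Bexp (Function.update w i (x i + (w i - x i))) := by
              rw [show x i + (w i - x i) = w i by abel, Function.update_eq_self]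
            rw [h1, Bexp.map_update_add]
          have hz2 : NN.mkQ (Bexp (Function.update w i (w i - x i))) = 0 := by
            rw [Submodule.mkQ_apply, Submodule.Quotient.mk_eq_zero]
            exact key _ i (by simpa using hmem i)
          have step : NN.mkQ (Bexp w) = NN.mkQ (Bexp (Function.update w i (x i))) := by
            rw [hsplit, map_add, hz2, add_zero]
          rw [step]
          refine ih (Function.update w i (x i)) x ?_ ?_
          · intro k
            by_cases hk : k = i
            · subst hk; simp
            · rw [Function.update_of_ne hk]; exact hmem k
          · intro k hk
            by_cases hk' : k = i
            · subst hk'; simp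
            · rw [Function.update_of_ne hk']
              refine h k ?_
              have : k.1 ≠ t := fun hh => hk' (Fin.ext hh)
              omega
        · refine ih w x hmem fun k hk => absurd hk ?_
          have := k.isLt
          omega
    intro w x h
    exact main (m + 1) w x h fun k hk => absurd hk (by have := k.isLt; omega)
  -- Step 4: a linear section of the quotient map
  obtain ⟨C, hC⟩ := Submodule.exists_isCompl NN
  let e := Submodule.quotientEquivOfIsCompl NN C hC
  let g : ((S →₀ G) ⧸ NN) →ₗ[K] (S →₀ G) := C.subtype ∘ₗ e.toLinearMap
  have hg : ∀ u, NN.mkQ (g u) = u := by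
    intro u
    exact
      Submodule.mk_quotientEquivOfIsCompl_apply hC u
  let Bq := NN.mkQ.compAlternatingMap (Bexp.compLinearMap g)
  have prop1 : ∀ x : Fin (m + 1) → (S →₀ G),
      Bq (fun k => Submodule.Quotient.mk (x k)) = Submodule.Quotient.mk (Bexp x) := by
    intro x
    have h1 : Bq (fun k => Submodule.Quotient.mk (x k)) =
        NN.mkQ (Bexp (fun k => g (Submodule.Quotient.mk (x k)))) := by
      simp [Bq, LinearMap.compAlternatingMap_apply, AlternatingMap.compLinearMap_apply]
    rw [h1, ← Submodule.mkQ_apply]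
    apply congr_lem
    intro k
    rw [← Submodule.Quotient.mk_eq_zero NN, Submodule.Quotient.mk_sub]
    rw [← Submodule.mkQ_apply, ← Submodule.mkQ_apply, hg]
    simp
  -- Step 5: GJI for Bexp
  have GJIexp : GJI Bexp := by
    intro x
    have h0 : Jmap Bexp.toMultilinearMap x = 0 := by
      have hx : Jmap Bexp.toMultilinearMap x =
          Jmap Bexp.toMultilinearMap (fun j => ∑ s ∈ (x j).support, gen s (x j s)) := by
        congr 1
        funext j
        exact (Finsupp.sum_single (x j)).symm
      rw [hx, (Jmap Bexp.toMultilinearMap).map_sum_finset (fun j s => gen s (x j s))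
        (fun j => (x j).support)]
      refine Finset.sum_eq_zero fun r _ => ?_
      simp only [Jmap_apply, AlternatingMap.coe_multilinearMap]
      set X : Fin (2 * m + 1) → G := fun k => x k (r k) with hX
      set c : Equiv.Perm (Fin (2 * m + 1)) → S := fun σ =>
        sprod (Fin.cons (sprod fun j : Fin (m + 1) => r (σ (Fin.castLE (by omega) j)))
          (fun j : Fin m => r (σ ⟨m + 1 + j.1, by have := j.isLt; omega⟩))) with hc
      have step1 : ∀ σ : Equiv.Perm (Fin (2 * m + 1)),
          Bexp (Fin.cons (Bexp fun j => gen (r (σ (Fin.castLE (by omega) j)))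
              (x (σ (Fin.castLE (by omega) j)) (r (σ (Fin.castLE (by omega) j)))))
            (fun j : Fin m => gen (r (σ ⟨m + 1 + j.1, by have := j.isLt; omega⟩))
              (x (σ ⟨m + 1 + j.1, by have := j.isLt; omega⟩)
                (r (σ ⟨m + 1 + j.1, by have := j.isLt; omega⟩)))))
          = gen (c σ) (B (Fin.cons (B fun j => X (σ (Fin.castLE (by omega) j)))
              (fun j : Fin m => X (σ ⟨m + 1 + j.1, by have := j.isLt; omega⟩)))) := by
        intro σ
        rw [hBexp (fun j : Fin (m + 1) => r (σ (Fin.castLE (by omega) j)))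
          (fun j : Fin (m + 1) => X (σ (Fin.castLE (by omega) j)))]
        rw [show (fun j : Fin m => gen (r (σ ⟨m + 1 + j.1, by have := j.isLt; omega⟩))
              (x (σ ⟨m + 1 + j.1, by have := j.isLt; omega⟩)
                (r (σ ⟨m + 1 + j.1, by have := j.isLt; omega⟩))))
            = fun j : Fin m => gen (r (σ ⟨m + 1 + j.1, by have := j.isLt; omega⟩))
              (X (σ ⟨m + 1 + j.1, by have := j.isLt; omega⟩)) from rfl]
        rw [cons_gen, hBexp]
      have hcoe : ∀ σ : Equiv.Perm (Fin (2 * m + 1)),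
          ((c σ : S) : WithOne S) = ∏ k, ((r k : S) : WithOne S) := by
        intro σ
        rw [hc]
        rw [sprod_coe, Fin.prod_univ_succ]
        simp only [Fin.cons_zero, Fin.cons_succ]
        rw [sprod_coe]
        rw [← Equiv.prod_comp σ (fun k => ((r k : S) : WithOne S))]
        rw [← Equiv.prod_comp (finSumFinEquiv.trans (finCongr (by omega : (m+1)+m = 2*m+1)))
          (fun k => ((r (σ k) : S) : WithOne S))]
        rw [Fintype.prod_sum_type]
        congr 1
      set P : S := c 1 with hP
      have hcP : ∀ σ, c σ = P := fun σ => WithOne.coe_inj.mp ((hcoe σ).trans (hcoe 1).symm)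
      simp only [step1, hcP]
      simp only [gen, Finsupp.smul_single]
      rw [show (fun σ : Equiv.Perm (Fin (2 * m + 1)) =>
          Finsupp.single P ((Equiv.Perm.sign σ : ℤ) •
            B (Fin.cons (B fun j => X (σ (Fin.castLE (by omega) j)))
              (fun j : Fin m => X (σ ⟨m + 1 + j.1, by have := j.isLt; omega⟩)))))
        = fun σ => (Finsupp.singleAddHom P) ((Equiv.Perm.sign σ : ℤ) •
            B (Fin.cons (B fun j => X (σ (Fin.castLE (by omega) j)))
              (fun j : Fin m => X (σ ⟨m + 1 + j.1, by have := j.isLt; omega⟩)))) from rfl]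
      rw [← map_sum, hB X, map_zero]
    rw [Jmap_apply] at h0
    simpa only [AlternatingMap.coe_multilinearMap] using h0
  -- Step 6: conclude
  refine ⟨Bq, prop1, ?_⟩
  intro xq
  choose x hx using fun k => Submodule.Quotient.mk_surjective NN (xq k)
  have hxq : xq = fun k => Submodule.Quotient.mk (x k) := funext fun k => (hx k).symm
  simp only [hxq]
  have inner : ∀ σ : Equiv.Perm (Fin (2 * m + 1)),
      (Bq fun j => Submodule.Quotient.mk (x (σ (Fin.castLE (by omega) j)))) =
        Submodule.Quotient.mk (Bexp fun j => x (σ (Fin.castLE (by omega) j))) :=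
    fun σ => prop1 _
  simp only [inner]
  have cons_mk : ∀ (A : S →₀ G) (p : Fin m → (S →₀ G)),
      (Fin.cons (Submodule.Quotient.mk A : (S →₀ G) ⧸ NN)
        (fun j => (Submodule.Quotient.mk (p j) : (S →₀ G) ⧸ NN))) =
      fun k => (Submodule.Quotient.mk ((Fin.cons A p : Fin (m + 1) → S →₀ G) k) :
        (S →₀ G) ⧸ NN) := by
    intro A p
    funext k
    refine Fin.cases ?_ ?_ k <;> simp
  simp only [cons_mk, prop1]
  have hsm : ∀ (n : ℤ) (v : S →₀ G),
      n • (Submodule.Quotient.mk v : (S →₀ G) ⧸ NN) = Submodule.Quotient.mk (n • v) := by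
    intro n v
    rw [← Submodule.mkQ_apply, ← Submodule.mkQ_apply, map_zsmul]
  simp only [hsm]
  simp only [← Submodule.mkQ_apply]
  rw [← map_sum, GJIexp x, map_zero]
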